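/- Let q be a probability distribution on a finite set J and let (ρ_j)_{j∈J} be density matrices on a finite-dimensional complex Hilbert space A. Consider the classical-quantum state ρ^{AB} = ∑_j q_j·ρ_j ⊗ |j⟩⟨j| on A ⊗ ℂ^J, where |j⟩⟨j| is the diagonal matrix unit at j. Then H_min(A|B)_ρ ≥ min_j H_min(ρ_j). -/

import Mathlib

open scoped BigOperators ComplexOrder
open Kronecker

noncomputable section

/-- A probability distribution on a finite type. -/
def IsProbDist {I : Type*} [Fintype I] (p : I → ℝ) : Prop :=
  (∀ i, 0 ≤ p i) ∧ ∑ i, p i = 1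

/-- Conditional min-entropy (base 2) of a bipartite state `ρAB` on `A ⊗ B`:
`−log min{ λ ≥ 0 : ∃ density matrix σ on B, λ(1_A ⊗ σ) − ρAB is PSD }`. -/
def condHminMat {A B : Type} [Fintype A] [DecidableEq A] [Fintype B] [DecidableEq B]
    (ρAB : Matrix (A × B) (A × B) ℂ) : ℝ :=
  - Real.logb 2 (sInf { l : ℝ | 0 ≤ l ∧ ∃ σ : Matrix B B ℂ, σ.PosSemidef ∧ σ.trace = 1 ∧
      (l • ((1 : Matrix A A ℂ) ⊗ₖ σ) - ρAB).PosSemidef })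

lemma conjT_kron {m n : Type*} [Fintype m] [Fintype n] (A : Matrix m m ℂ) (B : Matrix n n ℂ) :
    (A ⊗ₖ B).conjTranspose = A.conjTranspose ⊗ₖ B.conjTranspose := by
  ext ⟨a, b⟩ ⟨c, d⟩
  simp [Matrix.conjTranspose_apply, Matrix.kroneckerMap_apply, star_mul', mul_comm]

lemma psd_kron {m n : Type*} [Fintype m] [Fintype n]
    {M : Matrix m m ℂ} {N : Matrix n n ℂ} (hM : M.PosSemidef) (hN : N.PosSemidef) :
    (M ⊗ₖ N).PosSemidef := by
  exact hM.kronecker hN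

lemma psd_rsmul {n : Type*} [Fintype n] {M : Matrix n n ℂ} (hM : M.PosSemidef)
    {c : ℝ} (hc : 0 ≤ c) : (c • M).PosSemidef := by
  rw [Matrix.posSemidef_iff_dotProduct_mulVec] at hM ⊢
  constructor
  · show (c • M).conjTranspose = c • M
    rw [Matrix.conjTranspose_smul, star_trivial, hM.1]
  · intro x
    rw [Matrix.smul_mulVec, dotProduct_smul]
    have h := hM.2 x
    rw [Complex.real_smul]
    exact mul_nonneg (by exact_mod_cast hc) h

lemma psd_sum {n J : Type*} [Fintype n] [Fintype J] (f : J → Matrix n n ℂ)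
    (h : ∀ j, (f j).PosSemidef) : (∑ j, f j).PosSemidef := by
  classical
  exact Finset.sum_induction f _ (fun a b ha hb => ha.add hb) Matrix.PosSemidef.zero
    (fun j _ => h j)

lemma psd_diag_entry {n : Type*} [Fintype n] [DecidableEq n] {M : Matrix n n ℂ}
    (hM : M.PosSemidef) (i : n) : 0 ≤ M i i := by
  exact hM.diag_nonneg

lemma psd_smul_one_sub {n : Type*} [Fintype n] [DecidableEq n] {M : Matrix n n ℂ}
    (hM : M.IsHermitian) {l : ℝ} (h : ∀ i, hM.eigenvalues i ≤ l) :
    (l • (1 : Matrix n n ℂ) - M).PosSemidef := by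
  have hU : (hM.eigenvectorUnitary : Matrix n n ℂ) *
      (star (hM.eigenvectorUnitary : Matrix n n ℂ)) = 1 :=
    Matrix.mem_unitaryGroup_iff.mp hM.eigenvectorUnitary.2
  have hdiag : l • (1 : Matrix n n ℂ) - Matrix.diagonal (RCLike.ofReal ∘ hM.eigenvalues) =
      Matrix.diagonal (fun i => ((l - hM.eigenvalues i : ℝ) : ℂ)) := by
    rw [← Matrix.diagonal_one, ← Matrix.diagonal_smul, Matrix.diagonal_sub]
    ext i
    simp [Complex.real_smul]
  have hone : l • (1 : Matrix n n ℂ) - M =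
      (hM.eigenvectorUnitary : Matrix n n ℂ) *
        (Matrix.diagonal (fun i => ((l - hM.eigenvalues i : ℝ) : ℂ))) *
        (star (hM.eigenvectorUnitary : Matrix n n ℂ)) := by
    rw [← hdiag, Matrix.mul_sub, Matrix.sub_mul, Matrix.mul_smul, Matrix.mul_one,
      Matrix.smul_mul, hU, ← Unitary.conjStarAlgAut_apply (S := ℂ), ← hM.spectral_theorem]
  rw [hone, Matrix.star_eq_conjTranspose]
  exact (Matrix.PosSemidef.diagonal (fun i => Complex.zero_le_real.mpr (by linarith [h i]))
    ).mul_mul_conjTranspose_same _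

lemma psd_std {J : Type*} [Fintype J] [DecidableEq J] (j : J) :
    (Matrix.single j j (1 : ℂ)).PosSemidef := by
  have : Matrix.single j j (1 : ℂ) = Matrix.diagonal (Pi.single j 1) := by
    ext a b
    rcases eq_or_ne a b with rfl | hab
    · rcases eq_or_ne j a with rfl | hja <;>
        simp [Matrix.single, Pi.single_apply, *]
    · have : ¬(j = a ∧ j = b) := by rintro ⟨rfl, rfl⟩; exact hab rfl
      simp [Matrix.single, Matrix.diagonal_apply_ne _ hab, this]
  rw [this]
  exact Matrix.PosSemidef.diagonal (fun i => by
    rcases eq_or_ne j i with rfl | hji <;> simp [Pi.single_apply, *])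

lemma key_identity {DA : ℕ} {J : Type} [Fintype J] [DecidableEq J]
    (q : J → ℝ) (ρ : J → Matrix (Fin DA) (Fin DA) ℂ) (l : ℝ) :
    l • ((1 : Matrix (Fin DA) (Fin DA) ℂ) ⊗ₖ Matrix.diagonal (fun j => (q j : ℂ)))
      - ∑ j, q j • (ρ j ⊗ₖ Matrix.single j j (1 : ℂ))
    = ∑ j, q j • ((l • (1 : Matrix (Fin DA) (Fin DA) ℂ) - ρ j) ⊗ₖ
        Matrix.single j j (1 : ℂ)) := by
  ext ⟨a, b⟩ ⟨c, d⟩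
  simp only [Matrix.sub_apply, Matrix.smul_apply, Matrix.sum_apply,
    Matrix.kroneckerMap_apply, Matrix.single, Matrix.of_apply,
    Matrix.diagonal_apply, Matrix.one_apply, smul_eq_mul]
  have hz : ∀ (f : J → ℂ), b ≠ d → ∀ j ∈ Finset.univ,
      q j • (f j * if j = b ∧ j = d then (1:ℂ) else 0) = 0 := by
    intro f hbd j _
    rw [if_neg (by rintro ⟨rfl, rfl⟩; exact hbd rfl)]
    simp
  by_cases hbd : b = d
  · subst hbd
    rw [Finset.sum_eq_single b (fun j _ hj => by simp [hj]) (by simp),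
        Finset.sum_eq_single b (fun j _ hj => by simp [hj]) (by simp)]
    simp only [if_pos (And.intro rfl rfl), Complex.real_smul, mul_one]
    by_cases hac : a = c <;> simp [hac] <;> ring
  · rw [Finset.sum_eq_zero (hz _ hbd), Finset.sum_eq_zero (hz _ hbd)]
    simp [hbd]

lemma trace_std {J : Type*} [Fintype J] [DecidableEq J] (j : J) :
    (Matrix.single j j (1 : ℂ)).trace = 1 := by
  simp [Matrix.trace, Matrix.diag, Matrix.single]

/-- for a classical-quantum state `ρ^{AB} = ∑_j q_j · ρ_j ⊗ |j⟩⟨j|`,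
the conditional min-entropy satisfies `H_min(A|B) ≥ min_j H_min(ρ_j)`, where
`H_min(ρ_j) = −log` of the largest eigenvalue of `ρ_j`. -/
theorem cond_min_entropy_cq_state
    {DA : ℕ} {J : Type} [Fintype J] [DecidableEq J]
    (q : J → ℝ) (hq : IsProbDist q)
    (ρ : J → Matrix (Fin DA) (Fin DA) ℂ)
    (hρ : ∀ j, (ρ j).PosSemidef) (hρtr : ∀ j, (ρ j).trace = 1) :
    condHminMat (∑ j, q j • (ρ j ⊗ₖ Matrix.single j j (1 : ℂ)))
    ≥ ⨅ j, - Real.logb 2 (⨆ i, (hρ j).isHermitian.eigenvalues i) := by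
  obtain ⟨hq0, hq1⟩ := hq
  haveI hJ : Nonempty J := by
    by_contra h
    rw [not_nonempty_iff] at h
    rw [Finset.univ_eq_empty, Finset.sum_empty] at hq1
    norm_num at hq1
  -- sum of eigenvalues is the trace
  have htr : ∀ j, ∑ i, (hρ j).isHermitian.eigenvalues i = 1 := by
    intro j
    have hUj : (star ((hρ j).isHermitian.eigenvectorUnitary : Matrix (Fin DA) (Fin DA) ℂ)) *
        ((hρ j).isHermitian.eigenvectorUnitary : Matrix (Fin DA) (Fin DA) ℂ) = 1 :=
      Matrix.mem_unitaryGroup_iff'.mp (hρ j).isHermitian.eigenvectorUnitary.2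
    have h1 : (ρ j).trace = ∑ i, ((hρ j).isHermitian.eigenvalues i : ℂ) := by
      conv_lhs => rw [(hρ j).isHermitian.spectral_theorem, Unitary.conjStarAlgAut_apply]
      rw [Matrix.trace_mul_cycle, hUj, Matrix.one_mul, Matrix.trace_diagonal]
      simp
    rw [hρtr j] at h1
    exact_mod_cast h1.symm
  set m : J → ℝ := fun j => ⨆ i, (hρ j).isHermitian.eigenvalues i with hm
  have hDA : 0 < DA := by
    rcases Nat.eq_zero_or_pos DA with h | h
    · exfalso
      have := htr (Classical.arbitrary J)
      subst h
      simp at this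
    · exact h
  haveI : Nonempty (Fin DA) := ⟨⟨0, hDA⟩⟩
  have hbddA : ∀ j, ∀ i, (hρ j).isHermitian.eigenvalues i ≤ m j := fun j i =>
    le_ciSup (Set.finite_range _).bddAbove i
  obtain ⟨j0, hj0⟩ := Finite.exists_max m
  have hmpos : ∀ j, 0 < m j := by
    intro j
    obtain ⟨i, hi⟩ : ∃ i, 0 < (hρ j).isHermitian.eigenvalues i := by
      by_contra h
      push_neg at h
      have := Finset.sum_nonpos (fun i (_ : i ∈ Finset.univ) => h i)
      rw [htr j] at this
      norm_num at this
    exact lt_of_lt_of_le hi (hbddA j i)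
  rw [condHminMat, ge_iff_le]
  set S := { l : ℝ | 0 ≤ l ∧ ∃ σ : Matrix J J ℂ, σ.PosSemidef ∧ σ.trace = 1 ∧
      (l • ((1 : Matrix (Fin DA) (Fin DA) ℂ) ⊗ₖ σ)
        - ∑ j, q j • (ρ j ⊗ₖ Matrix.single j j (1 : ℂ))).PosSemidef } with hS
  have hmem : m j0 ∈ S := by
    refine ⟨le_of_lt (hmpos j0), Matrix.diagonal (fun j => (q j : ℂ)), ?_, ?_, ?_⟩
    · exact Matrix.PosSemidef.diagonal (fun j => Complex.zero_le_real.mpr (hq0 j))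
    · rw [Matrix.trace_diagonal]
      rw [← Complex.ofReal_sum, ← Complex.ofReal_one]
      exact_mod_cast congrArg Complex.ofReal hq1
    · rw [key_identity]
      refine psd_sum _ (fun j => psd_rsmul (psd_kron ?_ (psd_std j)) (hq0 j))
      exact psd_smul_one_sub (hρ j).isHermitian
        (fun i => le_trans (hbddA j i) (hj0 j))
  have hbddS : BddBelow S := ⟨0, fun l hl => hl.1⟩
  have hSle : sInf S ≤ m j0 := csInf_le hbddS hmem
  have hSlb : ∀ l ∈ S, 1 / (DA : ℝ) ≤ l := by
    rintro l ⟨hl0, σ, hσ, hσtr, hpsd⟩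
    have htr0 : 0 ≤ (l • ((1 : Matrix (Fin DA) (Fin DA) ℂ) ⊗ₖ σ)
        - ∑ j, q j • (ρ j ⊗ₖ Matrix.single j j (1 : ℂ))).trace := by
      unfold Matrix.trace
      exact Finset.sum_nonneg (fun i _ => psd_diag_entry hpsd i)
    have htreq : (l • ((1 : Matrix (Fin DA) (Fin DA) ℂ) ⊗ₖ σ)
        - ∑ j, q j • (ρ j ⊗ₖ Matrix.single j j (1 : ℂ))).trace
        = ((l * DA - 1 : ℝ) : ℂ) := by
      rw [Matrix.trace_sub, Matrix.trace_smul, Matrix.trace_sum,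
        Matrix.trace_kronecker, Matrix.trace_one, hσtr]
      have : ∀ j, ((q j • (ρ j ⊗ₖ Matrix.single j j (1 : ℂ))).trace)
          = ((q j : ℝ) : ℂ) := by
        intro j
        rw [Matrix.trace_smul, Matrix.trace_kronecker, hρtr j, trace_std]
        simp [Complex.real_smul]
      rw [Finset.sum_congr rfl (fun j _ => this j), ← Complex.ofReal_sum, hq1]
      push_cast [Complex.real_smul]
      simp [Fintype.card_fin]
    rw [htreq] at htr0
    have h2 : (0:ℝ) ≤ l * DA - 1 := Complex.zero_le_real.mp htr0
    rw [div_le_iff₀ (by exact_mod_cast hDA)]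
    linarith
  have hSpos : 0 < sInf S := by
    have h1 : (1 / (DA:ℝ)) ≤ sInf S := le_csInf ⟨_, hmem⟩ hSlb
    have : (0:ℝ) < 1 / DA := by positivity
    linarith
  have hstep : - Real.logb 2 (m j0) ≤ - Real.logb 2 (sInf S) := by
    apply neg_le_neg
    exact Real.logb_le_logb_of_le (by norm_num) hSpos hSle
  refine le_trans ?_ hstep
  exact ciInf_le (Set.finite_range _).bddBelow j0

end
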